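/- (Existence of a small conflicting set of sensors.) Assume 2s̄ ≤ p and that the system is 2s̄-sparse τ-observable. Fix an input sequence u and measurement data Y_i ∈ ℝ^τ for i ∈ {1,…,p}, and let ℍ_i = {x ∈ X : Y_i = H_{u,i}(x)}. If I ⊆ {1,…,p} satisfies |I| > p − 2s̄ and ⋂_{i∈I} ℍ_i = ∅, then there exists a subset J ⊆ I with |J| ≤ p − 2s̄ + 1 such that ⋂_{i∈J} ℍ_i = ∅. -/

import Mathlib

/-- Trajectory of the discrete-time system `x_{j+1} = f (x_j) (u_j)` started at `x`. -/
def traj {X U : Type*} (f : X → U → X) (u : ℕ → U) (x : X) : ℕ → X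
  | 0 => x
  | j + 1 => f (traj f u x j) (u j)

/-- Window measurement map of sensor `i` over a window of length `τ`:
`H_{u,i}(x) = (h_i(x₀), …, h_i(x_{τ-1}))`. -/
def Hmap {X U : Type*} {p : ℕ} (f : X → U → X) (h : X → Fin p → ℝ) (τ : ℕ)
    (u : ℕ → U) (i : Fin p) (x : X) : Fin τ → ℝ :=
  fun j => h (traj f u x (j : ℕ)) i

/-- existence of a small conflicting set of sensors. -/
theorem stmt9 {X U : Type*} {p τ sbar : ℕ} (hτ : 1 ≤ τ) (hp : 2 * sbar ≤ p)
    (f : X → U → X) (h : X → Fin p → ℝ)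
    (hobs : ∀ (u : ℕ → U) (Γ : Finset (Fin p)), Γ.card = 2 * sbar →
      Function.Injective
        (fun x : X => fun i : {i : Fin p // i ∉ Γ} => Hmap f h τ u i.1 x))
    (u : ℕ → U) (Y : Fin p → Fin τ → ℝ)
    (I : Finset (Fin p)) (hI : p - 2 * sbar < I.card)
    (hempty : {x : X | ∀ i ∈ I, Y i = Hmap f h τ u i x} = ∅) :
    ∃ J ⊆ I, J.card ≤ p - 2 * sbar + 1 ∧
      {x : X | ∀ i ∈ J, Y i = Hmap f h τ u i x} = ∅ := by
  by_contra hcon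
  push_neg at hcon
  obtain ⟨J0, hJ0I, hJ0card⟩ := Finset.exists_subset_card_eq (s := I) (n := p - 2 * sbar + 1) hI
  obtain ⟨x0, hx0⟩ := hcon J0 hJ0I hJ0card.le
  have hnall : ¬ ∀ i ∈ I, Y i = Hmap f h τ u i x0 := by
    intro hall
    have : x0 ∈ ({x : X | ∀ i ∈ I, Y i = Hmap f h τ u i x} : Set X) := hall
    rw [hempty] at this
    exact this
  push_neg at hnall
  obtain ⟨istar, histar, hne⟩ := hnall
  obtain ⟨J0', hJ0'sub, hJ0'card⟩ := Finset.exists_subset_card_eq (s := J0) (n := p - 2 * sbar) (by omega)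
  set J1 := insert istar J0' with hJ1
  have hJ1I : J1 ⊆ I := Finset.insert_subset histar (hJ0'sub.trans hJ0I)
  have hJ1card : J1.card ≤ p - 2 * sbar + 1 :=
    (Finset.card_insert_le _ _).trans (by omega)
  obtain ⟨x1, hx1⟩ := hcon J1 hJ1I hJ1card
  have hΓ : (J0'ᶜ).card = 2 * sbar := by
    rw [Finset.card_compl, hJ0'card, Fintype.card_fin]; omega
  have heq : x0 = x1 := by
    apply hobs u J0'ᶜ hΓ
    funext i
    have hi : i.1 ∈ J0' := by simpa using i.2
    have h0 := hx0 i.1 (hJ0'sub hi)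
    have h1 := hx1 i.1 (Finset.mem_insert_of_mem hi)
    simp only []
    rw [← h0, ← h1]
  exact hne (heq ▸ hx1 istar (Finset.mem_insert_self _ _))
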